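/- Let D : F[T] → F[T][[X]] be the Taylor homomorphism D(f)(X) = f(T+X) with coefficients D_j. For any f, π ∈ F[T] and j ≥ 1, the chain-rule identity holds: D_j(f(π)) = Σ_{i=1}^{j} D_{i,π}(f)(π) · Σ_{k_1+...+k_i = j, all k_m ≥ 1} D_{k_1}(π) ⋯ D_{k_i}(π), where D_{i,π}(f) denotes the i-th hyperdifferential operator in the variable of f, evaluated at π. -/

import Mathlib

open scoped Classical

open Polynomial

section Aux

lemma aux_hasseDeriv_map {R S : Type*} [Semiring R] [Semiring S] (φ : R →+* S) (k : ℕ)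
    (p : R[X]) : Polynomial.hasseDeriv k (p.map φ) = (Polynomial.hasseDeriv k p).map φ := by
  ext n
  simp [Polynomial.hasseDeriv_coeff, Polynomial.coeff_map]

/-- The coefficient of the "generic Taylor expansion" of `p` recovers `hasseDeriv`. -/
lemma aux_taylorX_coeff {F : Type*} [CommRing F] (p : F[X]) (j : ℕ) :
    (Polynomial.taylor (Polynomial.X : F[X]) (p.map Polynomial.C)).coeff j
      = Polynomial.hasseDeriv j p := by
  rw [Polynomial.taylor_coeff, aux_hasseDeriv_map, Polynomial.eval_map, Polynomial.eval₂_C_X]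

lemma aux_sum_antidiagonalTuple_succ {M : Type*} [AddCommMonoid M] (i j : ℕ)
    (f : (Fin (i + 1) → ℕ) → M) :
    ∑ k ∈ Finset.Nat.antidiagonalTuple (i + 1) j, f k
      = ∑ ab ∈ Finset.HasAntidiagonal.antidiagonal j, ∑ x ∈ Finset.Nat.antidiagonalTuple i ab.2,
          f (Fin.cons ab.1 x) := by
  rw [Finset.sum_sigma']
  refine Finset.sum_nbij'
    (i := fun k => (⟨(k 0, ∑ m, k (Fin.succ m)), fun m => k (Fin.succ m)⟩ :
      Σ ab : ℕ × ℕ, Fin i → ℕ))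
    (j := fun p => Fin.cons p.1.1 p.2) ?_ ?_ ?_ ?_ ?_
  · intro k hk
    simp only [Finset.Nat.mem_antidiagonalTuple] at hk
    simp only [Finset.mem_sigma, Finset.HasAntidiagonal.mem_antidiagonal, Finset.Nat.mem_antidiagonalTuple]
    exact ⟨by rw [← hk, Fin.sum_univ_succ], by simp⟩
  · rintro ⟨⟨a, b⟩, x⟩ h
    simp only [Finset.mem_sigma, Finset.HasAntidiagonal.mem_antidiagonal,
      Finset.Nat.mem_antidiagonalTuple] at h
    simp only [Finset.Nat.mem_antidiagonalTuple, Fin.sum_cons]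
    rw [h.2, h.1]
  · intro k _
    exact Fin.cons_self_tail k
  · rintro ⟨⟨a, b⟩, x⟩ h
    simp only [Finset.mem_sigma, Finset.HasAntidiagonal.mem_antidiagonal,
      Finset.Nat.mem_antidiagonalTuple] at h
    refine Sigma.ext ?_ (heq_of_eq ?_)
    · simp [Fin.sum_univ_succ, Prod.ext_iff, h.2]
    · funext m
      simp
  · intro k _
    exact congrArg f (Fin.cons_self_tail k).symm

lemma aux_coeff_pow_tuple {R : Type*} [CommSemiring R] (p : R[X]) (i j : ℕ) :
    (p ^ i).coeff j
      = ∑ k ∈ Finset.Nat.antidiagonalTuple i j, ∏ m : Fin i, p.coeff (k m) := by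
  induction i generalizing j with
  | zero =>
    cases j with
    | zero => simp
    | succ j => simp [Finset.Nat.antidiagonalTuple_zero_succ, Polynomial.coeff_one]
  | succ i ih =>
    rw [pow_succ', Polynomial.coeff_mul, aux_sum_antidiagonalTuple_succ]
    refine Finset.sum_congr rfl fun ab _ => ?_
    rw [ih, Finset.mul_sum]
    refine Finset.sum_congr rfl fun x _ => ?_
    rw [Fin.prod_univ_succ]
    simp

lemma aux_coeff_pow_tuple_filter {R : Type*} [CommSemiring R] (p : R[X])
    (hp : p.coeff 0 = 0) (i j : ℕ) :
    (p ^ i).coeff j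
      = ∑ k ∈ (Finset.Nat.antidiagonalTuple i j).filter (fun k => ∀ m, 0 < k m),
          ∏ m : Fin i, p.coeff (k m) := by
  rw [aux_coeff_pow_tuple]
  refine (Finset.sum_filter_of_ne ?_).symm
  intro k _ hk m
  by_contra h
  apply hk
  refine Finset.prod_eq_zero (Finset.mem_univ m) ?_
  rw [Nat.eq_zero_of_not_pos h, hp]

end Aux

/-- Teichmüller's chain rule for Hasse–Schmidt derivatives:
D_j(f(π)) = Σ_{i=1}^{j} (D_i f)(π) · Σ_{k_1+...+k_i = j, k_m ≥ 1} D_{k_1}(π)⋯D_{k_i}(π). -/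
theorem stmt_17 (F : Type*) [Field F] (f π : Polynomial F) (j : ℕ) (hj : 1 ≤ j) :
    Polynomial.hasseDeriv j (f.comp π) =
      ∑ i ∈ Finset.Icc 1 j,
        (Polynomial.hasseDeriv i f).comp π *
          ∑ k ∈ (Finset.Nat.antidiagonalTuple i j).filter (fun k => ∀ m, 0 < k m),
            ∏ m : Fin i, Polynomial.hasseDeriv (k m) π := by
  classical
  set u : Polynomial F[X] := Polynomial.taylor (Polynomial.X : F[X]) (π.map Polynomial.C)
    with hu
  set ρ : Polynomial F[X] := u - Polynomial.C π with hρdef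
  have hρ0 : ρ.coeff 0 = 0 := by
    rw [hρdef, Polynomial.coeff_sub, hu, aux_taylorX_coeff, Polynomial.hasseDeriv_zero',
      Polynomial.coeff_C_zero, sub_self]
  have hρ : ∀ k, 0 < k → ρ.coeff k = Polynomial.hasseDeriv k π := by
    intro k hk
    rw [hρdef, Polynomial.coeff_sub, hu, aux_taylorX_coeff, Polynomial.coeff_C,
      if_neg hk.ne', sub_zero]
  set N := f.natDegree + 1 with hN
  have htaydeg : (Polynomial.taylor (π : F[X]) (f.map Polynomial.C)).natDegree < N := by
    rw [Polynomial.natDegree_taylor]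
    exact Nat.lt_succ_of_le Polynomial.natDegree_map_le
  have htaycoeff : ∀ i, (Polynomial.taylor (π : F[X]) (f.map Polynomial.C)).coeff i
      = (Polynomial.hasseDeriv i f).comp π := by
    intro i
    rw [Polynomial.taylor_coeff, aux_hasseDeriv_map, Polynomial.eval_map]
    rfl
  have key : Polynomial.taylor (Polynomial.X : F[X]) ((f.comp π).map Polynomial.C)
      = ∑ i ∈ Finset.range N,
          Polynomial.C ((Polynomial.hasseDeriv i f).comp π) * ρ ^ i := by
    have h1 : f.map (Polynomial.C : F →+* F[X])
        = ∑ i ∈ Finset.range N,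
            Polynomial.C ((Polynomial.hasseDeriv i f).comp π)
              * (Polynomial.X - Polynomial.C (π : F[X])) ^ i := by
      conv_lhs => rw [← Polynomial.sum_taylor_eq (f.map Polynomial.C) (π : F[X])]
      rw [Polynomial.sum_over_range' _ (fun n => by simp) N htaydeg]
      exact Finset.sum_congr rfl fun i _ => by rw [htaycoeff]
    have h2 : Polynomial.taylor (Polynomial.X : F[X]) ((f.comp π).map Polynomial.C)
        = (f.map Polynomial.C).comp u := by
      rw [Polynomial.map_comp, Polynomial.taylor_apply, hu, Polynomial.taylor_apply,
        Polynomial.comp_assoc]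
    rw [h2, h1, Polynomial.sum_comp]
    refine Finset.sum_congr rfl fun i _ => ?_
    simp [Polynomial.mul_comp, Polynomial.pow_comp, Polynomial.sub_comp, hρdef, hu]
  have hc := congrArg (fun q => Polynomial.coeff q j) key
  simp only [aux_taylorX_coeff, Polynomial.finset_sum_coeff, Polynomial.coeff_C_mul] at hc
  rw [hc]
  have hterm : ∀ i, (Polynomial.hasseDeriv i f).comp π * (ρ ^ i).coeff j
      = (Polynomial.hasseDeriv i f).comp π *
          ∑ k ∈ (Finset.Nat.antidiagonalTuple i j).filter (fun k => ∀ m, 0 < k m),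
            ∏ m : Fin i, Polynomial.hasseDeriv (k m) π := by
    intro i
    rw [aux_coeff_pow_tuple_filter ρ hρ0]
    congr 1
    refine Finset.sum_congr rfl fun k hk => ?_
    rw [Finset.mem_filter] at hk
    exact Finset.prod_congr rfl fun m _ => hρ _ (hk.2 m)
  have hvanish : ∀ i, i ∉ Finset.Icc 1 j →
      ((Finset.Nat.antidiagonalTuple i j).filter (fun k => ∀ m, 0 < k m)) = ∅ := by
    intro i hi
    rw [Finset.mem_Icc, not_and_or] at hi
    refine Finset.eq_empty_of_forall_notMem fun k hk => ?_
    rw [Finset.mem_filter, Finset.Nat.mem_antidiagonalTuple] at hk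
    rcases hi with hi | hi
    · interval_cases i
      · obtain ⟨j', rfl⟩ := Nat.exists_eq_add_of_le hj
        have := hk.1
        simp at this
        omega
    · push_neg at hi
      have : (i : ℕ) ≤ ∑ m : Fin i, k m := by
        calc (i : ℕ) = ∑ _m : Fin i, 1 := by simp
        _ ≤ ∑ m : Fin i, k m := Finset.sum_le_sum fun m _ => hk.2 m
      omega
  calc ∑ i ∈ Finset.range N,
        (Polynomial.hasseDeriv i f).comp π * (ρ ^ i).coeff j
      = ∑ i ∈ Finset.range (N + j + 1),
        (Polynomial.hasseDeriv i f).comp π * (ρ ^ i).coeff j := by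
        refine Finset.sum_subset (Finset.range_subset_range.2 (by omega)) fun i _ hi => ?_
        rw [Finset.mem_range, not_lt] at hi
        rw [Polynomial.hasseDeriv_eq_zero_of_lt_natDegree f i (by omega)]
        simp
    _ = ∑ i ∈ Finset.Icc 1 j,
        (Polynomial.hasseDeriv i f).comp π *
          ∑ k ∈ (Finset.Nat.antidiagonalTuple i j).filter (fun k => ∀ m, 0 < k m),
            ∏ m : Fin i, Polynomial.hasseDeriv (k m) π := by
        rw [Finset.sum_congr rfl fun i _ => hterm i]
        refine (Finset.sum_subset ?_ fun i _ hi => ?_).symm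
        · intro i hi
          rw [Finset.mem_Icc] at hi
          rw [Finset.mem_range]
          omega
        · rw [hvanish i hi, Finset.sum_empty, mul_zero]
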